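/- For every natural number n > 1, the Cesàro means (1/N) ∑_{m=1}^{N} ∏_{p prime, p ∣ m} (1 − 1/p^{n-1}) converge, as N → ∞, to 1/ζ(n), where ζ is the Riemann zeta function. -/

import Mathlib

open Filter Finset Topology

private noncomputable def invPowAF (k : ℕ) : ArithmeticFunction ℂ :=
  ⟨fun d => if d = 0 then 0 else 1 / (d : ℂ) ^ k, by simp⟩

private lemma invPowAF_apply (k : ℕ) {d : ℕ} (hd : d ≠ 0) :
    invPowAF k d = 1 / (d : ℂ) ^ k := by
  simp [invPowAF, hd]

private lemma invPowAF_mult (k : ℕ) : (invPowAF k).IsMultiplicative := by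
  constructor
  · simp [invPowAF]
  · intro m n _
    rcases eq_or_ne m 0 with rfl | hm
    · simp [invPowAF]
    rcases eq_or_ne n 0 with rfl | hn
    · simp [invPowAF]
    have hmn : m * n ≠ 0 := mul_ne_zero hm hn
    rw [invPowAF_apply k hmn, invPowAF_apply k hm, invPowAF_apply k hn]
    push_cast
    rw [mul_pow]
    rw [div_mul_div_comm, one_mul]

private lemma squarefree_prod_primes {s : Finset ℕ} :
    (∀ p ∈ s, p.Prime) → Squarefree (∏ p ∈ s, p) := by
  classical
  induction s using Finset.cons_induction with
  | empty => intro _; simpa using squarefree_one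
  | cons a t ha ih =>
    intro hs
    rw [Finset.prod_cons]
    have hap : a.Prime := hs a (Finset.mem_cons_self a t)
    have hsp : ∀ p ∈ t, p.Prime := fun p hp => hs p (Finset.mem_cons_of_mem hp)
    refine (Nat.squarefree_mul ?_).mpr ⟨hap.squarefree, ih hsp⟩
    refine Nat.Coprime.prod_right fun p hp => ?_
    exact (Nat.coprime_primes hap (hsp p hp)).mpr (fun h => ha (h ▸ hp))

open ArithmeticFunction in
private lemma prod_eq_sum_divisors (k : ℕ) {m : ℕ} (hm : m ≠ 0) :
    ∏ p ∈ m.primeFactors, (1 - 1 / (p : ℂ) ^ k)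
      = ∑ d ∈ m.divisors, (moebius d : ℂ) / (d : ℂ) ^ k := by
  classical
  set r : ℕ := ∏ p ∈ m.primeFactors, p with hr
  have hprimes : ∀ p ∈ m.primeFactors, p.Prime := fun p hp =>
    Nat.prime_of_mem_primeFactors hp
  have hrsq : Squarefree r := squarefree_prod_primes hprimes
  have hrpf : r.primeFactors = m.primeFactors := Nat.primeFactors_prod hprimes
  have h1 : ∏ p ∈ m.primeFactors, (1 - 1 / (p : ℂ) ^ k)
      = ∏ p ∈ r.primeFactors, (1 - invPowAF k p) := by
    rw [hrpf]
    refine Finset.prod_congr rfl fun p hp => ?_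
    rw [invPowAF_apply k (Nat.prime_of_mem_primeFactors hp).ne_zero]
  rw [h1, (invPowAF_mult k).prodPrimeFactors_one_sub_of_squarefree _ hrsq]
  have hsub : r.divisors ⊆ m.divisors :=
    Nat.divisors_subset_of_dvd hm (Nat.prod_primeFactors_dvd m)
  rw [Finset.sum_subset hsub ?_]
  · refine Finset.sum_congr rfl fun d hd => ?_
    rw [invPowAF_apply k (Nat.pos_of_mem_divisors hd).ne']; ring
  · intro d hd hdr
    have hμ : moebius d = 0 := by
      refine moebius_eq_zero_of_not_squarefree fun hsq => ?_
      have hd0 : d ≠ 0 := (Nat.pos_of_mem_divisors hd).ne'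
      have hdvd : d ∣ r := by
        have h2 : d.primeFactors ⊆ m.primeFactors :=
          Nat.primeFactors_mono (Nat.dvd_of_mem_divisors hd) hm
        calc d = ∏ p ∈ d.primeFactors, p := (Nat.prod_primeFactors_of_squarefree hsq).symm
        _ ∣ ∏ p ∈ m.primeFactors, p := Finset.prod_dvd_prod_of_subset _ _ _ h2
      exact hdr (Nat.mem_divisors.mpr ⟨hdvd, hrsq.ne_zero⟩)
    simp [hμ]

private lemma swap_sum (c : ℕ → ℂ) (N : ℕ) :
    ∑ m ∈ Finset.Icc 1 N, ∑ d ∈ m.divisors, c d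
      = ∑ d ∈ Finset.Icc 1 N, ((N / d : ℕ) : ℂ) * c d := by
  classical
  rw [Finset.sum_comm' (s' := fun d => {m ∈ Finset.Icc 1 N | d ∣ m})
      (t' := Finset.Icc 1 N) (f := fun _ d => c d)]
  · refine Finset.sum_congr rfl fun d hd => ?_
    rw [Finset.sum_const, nsmul_eq_mul]
    congr 1
    have : Finset.Icc 1 N = Finset.Ioc 0 N := by
      ext x; simp [Nat.lt_iff_add_one_le]
    rw [this, Nat.Ioc_filter_dvd_card_eq_div]
  · intro m d
    simp only [Finset.mem_filter, Nat.mem_divisors, Finset.mem_Icc]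
    constructor
    · rintro ⟨⟨h1, h2⟩, hdvd, hm0⟩
      have hd1 : 1 ≤ d := Nat.pos_of_dvd_of_pos hdvd h1
      exact ⟨⟨⟨h1, h2⟩, hdvd⟩, hd1, le_trans (Nat.le_of_dvd h1 hdvd) h2⟩
    · rintro ⟨⟨⟨h1, h2⟩, hdvd⟩, _, _⟩
      exact ⟨⟨h1, h2⟩, hdvd, by omega⟩

private lemma tendsto_nat_div_div (d : ℕ) (hd : d ≠ 0) :
    Tendsto (fun N : ℕ => ((N / d : ℕ) : ℂ) / (N : ℂ)) atTop (𝓝 (1 / (d : ℂ))) := by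
  have hreal : Tendsto (fun N : ℕ => ((N / d : ℕ) : ℝ) / (N : ℝ)) atTop (𝓝 (1 / (d : ℝ))) := by
    have h := (tendsto_nat_floor_mul_div_atTop (a := 1 / (d : ℝ)) (by positivity)).comp
      (tendsto_natCast_atTop_atTop (R := ℝ))
    refine h.congr fun N => ?_
    simp only [Function.comp_apply]
    congr 2
    rw [one_div, inv_mul_eq_div, Nat.floor_div_natCast, Nat.floor_natCast]
  have h2 := (Complex.continuous_ofReal.tendsto (1 / (d : ℝ))).comp hreal
  have h3 : ((1 / (d : ℝ) : ℝ) : ℂ) = 1 / (d : ℂ) := by push_cast; ring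
  rw [h3] at h2
  refine h2.congr fun N => ?_
  simp [Function.comp_apply]

theorem cesaro_euler_like_minus_nat (n : ℕ) (hn : 1 < n) :
    Tendsto (fun N : ℕ =>
        (1 / (N : ℂ)) * ∑ m ∈ Finset.Icc 1 N,
          ∏ p ∈ m.primeFactors, (1 - 1 / (p : ℂ) ^ (n - 1)))
      atTop (nhds (1 / riemannZeta n)) := by
  classical
  set k := n - 1 with hk
  have hkn : k + 1 = n := by omega
  set c : ℕ → ℂ := fun d => (ArithmeticFunction.moebius d : ℂ) / (d : ℂ) ^ k with hc
  set G : ℕ → ℕ → ℂ := fun N d =>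
    if d ∈ Finset.Icc 1 N then ((N / d : ℕ) : ℂ) / (N : ℂ) * c d else 0 with hG
  set g : ℕ → ℂ := fun d => LSeries.term (fun m => ((ArithmeticFunction.moebius m : ℤ) : ℂ))
    (n : ℂ) d with hg
  have hre : 1 < (n : ℂ).re := by
    rw [Complex.natCast_re]; exact_mod_cast hn
  -- rewrite the sequence as a tsum
  have hEq : ∀ N : ℕ, (1 / (N : ℂ)) * ∑ m ∈ Finset.Icc 1 N,
      ∏ p ∈ m.primeFactors, (1 - 1 / (p : ℂ) ^ (n - 1)) = ∑' d, G N d := by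
    intro N
    have h1 : ∑ m ∈ Finset.Icc 1 N, ∏ p ∈ m.primeFactors, (1 - 1 / (p : ℂ) ^ (n - 1))
        = ∑ m ∈ Finset.Icc 1 N, ∑ d ∈ m.divisors, c d := by
      refine Finset.sum_congr rfl fun m hm => ?_
      have hm0 : m ≠ 0 := by
        have := (Finset.mem_Icc.mp hm).1; omega
      exact prod_eq_sum_divisors k hm0
    rw [h1, swap_sum]
    rw [tsum_eq_sum (s := Finset.Icc 1 N) (f := G N) (fun d hd => if_neg hd)]
    rw [Finset.mul_sum]
    refine Finset.sum_congr rfl fun d hd => ?_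
    simp only [hG, if_pos hd]
    ring
  -- dominated convergence
  have hmain : Tendsto (fun N => ∑' d, G N d) atTop (𝓝 (∑' d, g d)) := by
    refine tendsto_tsum_of_dominated_convergence
      (bound := fun d : ℕ => 1 / (d : ℝ) ^ n) (Real.summable_one_div_nat_pow.mpr hn) ?_ ?_
    · intro d
      rcases eq_or_ne d 0 with rfl | hd0
      · have : ∀ N : ℕ, G N 0 = 0 := fun N => by simp [hG]
        simp only [this]
        have : g 0 = 0 := LSeries.term_zero _ _
        rw [this]
        exact tendsto_const_nhds
      · have hgd : g d = 1 / (d : ℂ) * c d := by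
          simp only [hg, LSeries.term_of_ne_zero hd0]
          rw [Complex.cpow_natCast, hc, ← hkn, pow_succ]
          field_simp
        rw [hgd]
        have hev : ∀ᶠ N in atTop, ((N / d : ℕ) : ℂ) / (N : ℂ) * c d = G N d := by
          filter_upwards [eventually_ge_atTop d] with N hN
          have hmem : d ∈ Finset.Icc 1 N := Finset.mem_Icc.mpr ⟨Nat.one_le_iff_ne_zero.mpr hd0, hN⟩
          simp only [hG]
          rw [if_pos hmem]
        exact (((tendsto_nat_div_div d hd0).mul_const (c d)).congr' hev)
    · filter_upwards with N
      intro d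
      by_cases hd : d ∈ Finset.Icc 1 N
      · have hd1 : 1 ≤ d := (Finset.mem_Icc.mp hd).1
        have hdN : d ≤ N := (Finset.mem_Icc.mp hd).2
        have hN1 : 1 ≤ N := le_trans hd1 hdN
        simp only [hG, if_pos hd, norm_mul, norm_div]
        have hnorm1 : ‖((N / d : ℕ) : ℂ)‖ / ‖(N : ℂ)‖ ≤ 1 / (d : ℝ) := by
          rw [Complex.norm_natCast, Complex.norm_natCast]
          rw [div_le_div_iff₀ (by positivity) (by positivity), one_mul]
          exact_mod_cast Nat.div_mul_le_self N d
        have hdpos : (0 : ℝ) < (d : ℝ) := by exact_mod_cast hd1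
        have hnorm2 : ‖c d‖ ≤ 1 / (d : ℝ) ^ k := by
          simp only [hc, norm_div, norm_pow, Complex.norm_natCast]
          have hmu : ‖((ArithmeticFunction.moebius d : ℤ) : ℂ)‖ ≤ 1 := by
            rw [Complex.norm_intCast]
            have h5 := ArithmeticFunction.abs_moebius_le_one (n := d)
            exact_mod_cast h5
          exact div_le_div₀ zero_le_one hmu (pow_pos hdpos k) le_rfl
        calc ‖((N / d : ℕ) : ℂ)‖ / ‖(N : ℂ)‖ * ‖c d‖
            ≤ (1 / (d : ℝ)) * (1 / (d : ℝ) ^ k) := by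
              exact mul_le_mul hnorm1 hnorm2 (norm_nonneg _) (by positivity)
        _ = 1 / (d : ℝ) ^ n := by
              rw [← hkn, pow_succ]
              field_simp
      · simp only [hG, if_neg hd, norm_zero]
        positivity
  -- identify the limit
  have hlim : ∑' d, g d = 1 / riemannZeta n := by
    have h2 := LSeries_one_mul_Lseries_moebius (s := (n : ℂ)) hre
    rw [LSeries_one_eq_riemannZeta hre] at h2
    have h4 : LSeries (fun m => ((ArithmeticFunction.moebius m : ℤ) : ℂ)) (n : ℂ)
        = 1 / riemannZeta (n : ℂ) := eq_one_div_of_mul_eq_one_left (by rw [mul_comm] at h2; exact h2)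
    exact h4
  rw [← hlim]
  exact hmain.congr fun N => (hEq N).symm
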